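/- Let C be a binary linear code of length n and let {0}×C := {(0,c) ∈ F_2 × F_2^n : c ∈ C} ⊆ F_2^{n+1}. Then there exists a coordinate permutation σ of F_2^{n+1} such that {0}×C is σ-LCD, i.e. ({0}×C) ∩ (σ({0}×C))^⊥ = {0}. -/

import Mathlib

open scoped BigOperators

/-- The Euclidean dual of a linear code `C ⊆ F^ι`. -/
def dualCode {F : Type*} [Field F] {ι : Type*} [Fintype ι]
    (C : Submodule F (ι → F)) : Submodule F (ι → F) where
  carrier := {b | ∀ c ∈ C, ∑ i, b i * c i = 0}
  zero_mem' := by intro c hc; simp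
  add_mem' := by
    intro x y hx hy c hc
    simp only [Set.mem_setOf_eq, Pi.add_apply, add_mul, Finset.sum_add_distrib,
      hx c hc, hy c hc, add_zero]
  smul_mem' := by
    intro r x hx c hc
    simp only [Set.mem_setOf_eq, Pi.smul_apply, smul_eq_mul, mul_assoc,
      ← Finset.mul_sum, hx c hc, mul_zero]

/-- The coordinate permutation of `F^ι` associated with a permutation `π` of the
coordinates, as a linear map. -/
def permMap {F : Type*} [Field F] {ι : Type*} (π : Equiv.Perm ι) :
    (ι → F) →ₗ[F] (ι → F) where
  toFun v := fun i => v (π i)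
  map_add' := fun _ _ => rfl
  map_smul' := fun _ _ => rfl

/-- The linear embedding `c ↦ (0, c)` of `F^n` into `F^(n+1)`. -/
def consMap {F : Type*} [Field F] {n : ℕ} : (Fin n → F) →ₗ[F] (Fin (n + 1) → F) where
  toFun v := Fin.cons 0 v
  map_add' := by
    intro a b; funext i
    refine Fin.cases ?_ ?_ i <;> simp
  map_smul' := by
    intro r a; funext i
    refine Fin.cases ?_ ?_ i <;> simp

section AuxLemmas

variable {m : ℕ} (D : Submodule (ZMod 2) (Fin m → ZMod 2))

/-- Membership in the intersection appearing in the goal, unfolded. -/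
lemma mem_L_iff (σ : Equiv.Perm (Fin m)) (x : Fin m → ZMod 2) :
    x ∈ D ⊓ dualCode (D.map (permMap σ)) ↔
      x ∈ D ∧ ∀ y ∈ D, ∑ i, x i * y (σ i) = 0 := by
  constructor
  · rintro ⟨hxD, hdual⟩
    refine ⟨hxD, fun y hy => ?_⟩
    exact hdual (permMap σ y) ⟨y, hy, rfl⟩
  · rintro ⟨hxD, h⟩
    refine ⟨hxD, ?_⟩
    rintro c ⟨y, hy, rfl⟩
    exact h y hy

/-- Membership for the inverse permutation: this is the "right kernel" of the form. -/
lemma mem_L_inv_iff (σ : Equiv.Perm (Fin m)) (y : Fin m → ZMod 2) :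
    y ∈ D ⊓ dualCode (D.map (permMap σ⁻¹)) ↔
      y ∈ D ∧ ∀ x ∈ D, ∑ i, x i * y (σ i) = 0 := by
  rw [mem_L_iff]
  refine and_congr_right fun _ => ?_
  refine forall₂_congr fun x hx => ?_
  constructor <;> intro h
  · calc ∑ i, x i * y (σ i) = ∑ i, x (σ⁻¹ (σ i)) * y (σ i) := by simp
    _ = ∑ i, x (σ⁻¹ i) * y i := Equiv.sum_comp σ (fun i => x (σ⁻¹ i) * y i)
    _ = ∑ i, y i * x (σ⁻¹ i) := by simp [mul_comm]
    _ = 0 := h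
  · calc ∑ i, y i * x (σ⁻¹ i)
        = ∑ i, y (σ i) * x (σ⁻¹ (σ i)) := (Equiv.sum_comp σ (fun i => y i * x (σ⁻¹ i))).symm
    _ = ∑ i, x i * y (σ i) := by simp [mul_comm]
    _ = 0 := h

/-- The bilinear form `(x, y) ↦ ∑ i, x i * y (σ i)` on `D`. -/
noncomputable def bform (σ : Equiv.Perm (Fin m)) :
    D →ₗ[ZMod 2] (D →ₗ[ZMod 2] ZMod 2) :=
  LinearMap.mk₂ (ZMod 2)
    (fun x y => ∑ i, (x : Fin m → ZMod 2) i * (y : Fin m → ZMod 2) (σ i))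
    (by intro x x' y; simp [add_mul, Finset.sum_add_distrib])
    (by intro c x y; simp [Finset.mul_sum, mul_assoc])
    (by intro x y y'; simp [mul_add, Finset.sum_add_distrib])
    (by intro c x y; simp [Finset.mul_sum]; ring_nf; simp [mul_assoc, mul_comm, mul_left_comm])

lemma bform_ker_eq_bot (σ : Equiv.Perm (Fin m)) :
    LinearMap.ker (bform D σ) = ⊥ ↔
      (∀ x ∈ D, (∀ y ∈ D, ∑ i, x i * y (σ i) = 0) → x = 0) := by
  rw [LinearMap.ker_eq_bot']
  constructor
  · intro h x hx hxy
    have := h ⟨x, hx⟩ (by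
      ext y
      exact hxy (y : Fin m → ZMod 2) y.2)
    simpa [Submodule.mk_eq_zero] using this
  · intro h x hx
    have : (x : Fin m → ZMod 2) = 0 := by
      refine h x x.2 fun y hy => ?_
      have := congrFun (congrArg DFunLike.coe hx) ⟨y, hy⟩
      simpa [bform] using this
    exact Subtype.ext this

lemma bform_flip_ker_eq_bot (σ : Equiv.Perm (Fin m)) :
    LinearMap.ker (bform D σ).flip = ⊥ ↔
      (∀ y ∈ D, (∀ x ∈ D, ∑ i, x i * y (σ i) = 0) → y = 0) := by
  rw [LinearMap.ker_eq_bot']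
  constructor
  · intro h y hy hxy
    have := h ⟨y, hy⟩ (by
      ext x
      exact hxy (x : Fin m → ZMod 2) x.2)
    simpa [Submodule.mk_eq_zero] using this
  · intro h y hy
    have : (y : Fin m → ZMod 2) = 0 := by
      refine h y y.2 fun x hx => ?_
      have := congrFun (congrArg DFunLike.coe hy) ⟨x, hx⟩
      simpa [bform] using this
    exact Subtype.ext this

/-- Left and right kernels of a bilinear form on a finite-dimensional space have the
same dimension. -/
lemma bform_finrank_ker (σ : Equiv.Perm (Fin m)) :
    Module.finrank (ZMod 2) (LinearMap.ker (bform D σ).flip) =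
      Module.finrank (ZMod 2) (LinearMap.ker (bform D σ)) := by
  have e1 : (bform D σ).flip =
      (bform D σ).dualMap.comp (Module.Dual.eval (ZMod 2) D) := by
    ext y x; rfl
  have hr : Module.finrank (ZMod 2) (LinearMap.range (bform D σ).flip) =
      Module.finrank (ZMod 2) (LinearMap.range (bform D σ)) := by
    rw [e1, LinearMap.range_comp_of_range_eq_top _ (Module.erange_coe _ _)]
    exact LinearMap.finrank_range_dualMap_eq_finrank_range _
  have h1 := LinearMap.finrank_range_add_finrank_ker (bform D σ)
  have h2 := LinearMap.finrank_range_add_finrank_ker (bform D σ).flip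
  omega

/-- The effect of composing the permutation with a transposition on the form. -/
lemma swap_sum (σ : Equiv.Perm (Fin m)) {a b : Fin m} (hab : a ≠ b)
    (x y : Fin m → ZMod 2) :
    ∑ i, x i * y (σ (Equiv.swap a b i)) =
      (∑ i, x i * y (σ i)) + (x a + x b) * (y (σ a) + y (σ b)) := by
  have hsplit : ∀ f : Fin m → ZMod 2,
      ∑ i, f i = f a + (f b + ∑ i ∈ (Finset.univ.erase a).erase b, f i) := by
    intro f
    rw [Finset.add_sum_erase _ f (by simp [hab.symm] : b ∈ Finset.univ.erase a)]
    rw [Finset.add_sum_erase _ f (Finset.mem_univ a)]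
  rw [hsplit (fun i => x i * y (σ (Equiv.swap a b i))),
      hsplit (fun i => x i * y (σ i))]
  have hrest : ∑ i ∈ (Finset.univ.erase a).erase b, x i * y (σ (Equiv.swap a b i)) =
      ∑ i ∈ (Finset.univ.erase a).erase b, x i * y (σ i) := by
    refine Finset.sum_congr rfl fun i hi => ?_
    simp only [Finset.mem_erase] at hi
    rw [Equiv.swap_apply_of_ne_of_ne hi.2.1 hi.1]
  rw [hrest]
  simp only [Equiv.swap_apply_left, Equiv.swap_apply_right]
  have key : ∀ p q r s S : ZMod 2,
      p * s + (q * r + S) = p * r + (q * s + S) + (p + q) * (r + s) := by decide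
  exact key (x a) (x b) (y (σ a)) (y (σ b)) _

end AuxLemmas

lemma zmod2_ne_iff : ∀ {p q : ZMod 2}, p ≠ q ↔ p + q = 1 := by decide

lemma zmod2_eq_one : ∀ {p : ZMod 2}, p ≠ 0 → p = 1 := by decide

lemma zmod2_cases (p : ZMod 2) : p = 0 ∨ p = 1 := by revert p; decide

/-- Given non-constant "patterns" `α` and `β`, there is a pair of indices on which both
`α` and `β` differ. -/
lemma good_pair {m : ℕ} (α β : Fin m → ZMod 2) {i₀ i₁ j₀ j₁ : Fin m}
    (h0 : α i₀ = 0) (h1 : α i₁ = 1) (k0 : β j₀ = 0) (k1 : β j₁ = 1) :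
    ∃ a b, α a ≠ α b ∧ β a ≠ β b := by
  by_cases hβ : β i₀ = β i₁
  · by_cases hα : α j₀ = α j₁
    · rcases zmod2_cases (β i₀) with hc | hc <;> rcases zmod2_cases (α j₀) with hd | hd
      · exact ⟨i₁, j₁, by rw [h1, ← hα, hd]; decide, by rw [← hβ, hc, k1]; decide⟩
      · exact ⟨i₀, j₁, by rw [h0, ← hα, hd]; decide, by rw [hc, k1]; decide⟩
      · exact ⟨i₁, j₀, by rw [h1, hd]; decide, by rw [← hβ, hc, k0]; decide⟩
      · exact ⟨i₀, j₀, by rw [h0, hd]; decide, by rw [hc, k0]; decide⟩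
    · exact ⟨j₀, j₁, hα, by rw [k0, k1]; decide⟩
  · exact ⟨i₀, i₁, by rw [h0, h1]; decide, hβ⟩

/-- Let `C` be a binary linear code of length `n` and `{0} × C ⊆ F_2^(n+1)`.  Then
there exists a coordinate permutation `σ` of `F_2^(n+1)` such that `{0} × C` is
`σ`-LCD, i.e. `({0} × C) ∩ (σ({0} × C))^⊥ = {0}`. -/
theorem exists_perm_lcd_zero_cross_binary {n : ℕ}
    (C : Submodule (ZMod 2) (Fin n → ZMod 2)) :
    ∃ σ : Equiv.Perm (Fin (n + 1)),
      (C.map consMap) ⊓ dualCode ((C.map consMap).map (permMap σ)) = ⊥ := by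
  set D := C.map consMap with hD
  have hD0 : ∀ x ∈ D, x 0 = 0 := by
    rintro x ⟨c, hc, rfl⟩
    simp [consMap]
  suffices H : ∀ (d : ℕ) (σ : Equiv.Perm (Fin (n + 1))),
      Module.finrank (ZMod 2) ↥(D ⊓ dualCode (D.map (permMap σ))) ≤ d →
      ∃ σ', D ⊓ dualCode (D.map (permMap σ')) = ⊥ by
    exact H _ (Equiv.refl _) le_rfl
  intro d
  induction d with
  | zero =>
    intro σ h
    exact ⟨σ, Submodule.finrank_eq_zero.mp (Nat.le_zero.mp h)⟩
  | succ d ih =>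
    intro σ hle
    by_cases hbot : D ⊓ dualCode (D.map (permMap σ)) = ⊥
    · exact ⟨σ, hbot⟩
    have hRbot : D ⊓ dualCode (D.map (permMap σ⁻¹)) ≠ ⊥ := by
      intro hR
      apply hbot
      have h1 : LinearMap.ker (bform D σ).flip = ⊥ := by
        rw [bform_flip_ker_eq_bot]
        intro y hy hxy
        have hmem : y ∈ D ⊓ dualCode (D.map (permMap σ⁻¹)) :=
          (mem_L_inv_iff D σ y).mpr ⟨hy, hxy⟩
        rw [hR] at hmem
        simpa using hmem
      have h2 : LinearMap.ker (bform D σ) = ⊥ := by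
        have h3 := bform_finrank_ker D σ
        rw [h1] at h3
        simp only [finrank_bot] at h3
        exact Submodule.finrank_eq_zero.mp h3.symm
      rw [Submodule.eq_bot_iff]
      intro x hx
      rw [mem_L_iff] at hx
      exact (bform_ker_eq_bot D σ).mp h2 x hx.1 hx.2
    obtain ⟨x₀, hx₀L, hx₀ne⟩ := (Submodule.ne_bot_iff _).mp hbot
    obtain ⟨y₀, hy₀R, hy₀ne⟩ := (Submodule.ne_bot_iff _).mp hRbot
    rw [mem_L_iff] at hx₀L
    rw [mem_L_inv_iff] at hy₀R
    obtain ⟨hx₀D, hx₀d⟩ := hx₀L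
    obtain ⟨hy₀D, hy₀d⟩ := hy₀R
    obtain ⟨i₁, hi₁⟩ := Function.ne_iff.mp hx₀ne
    obtain ⟨m', hm'⟩ := Function.ne_iff.mp hy₀ne
    obtain ⟨a, b, hαab, hβab⟩ := good_pair x₀ (fun i => y₀ (σ i))
      (i₀ := 0) (i₁ := i₁) (j₀ := σ⁻¹ 0) (j₁ := σ⁻¹ m')
      (hD0 x₀ hx₀D) (zmod2_eq_one (by simpa using hi₁))
      (by show y₀ (σ (σ⁻¹ 0)) = 0; rw [Equiv.Perm.inv_def, Equiv.apply_symm_apply]; exact hD0 y₀ hy₀D)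
      (by show y₀ (σ (σ⁻¹ m')) = 1; rw [Equiv.Perm.inv_def, Equiv.apply_symm_apply]
          exact zmod2_eq_one (by simpa using hm'))
    have hab : a ≠ b := fun h => hαab (by rw [h])
    have hψ : y₀ (σ a) + y₀ (σ b) = 1 := zmod2_ne_iff.mp hβab
    have hφ : x₀ a + x₀ b = 1 := zmod2_ne_iff.mp hαab
    set σ' := (Equiv.swap a b).trans σ with hσ'
    have happ : ∀ (x y : Fin (n + 1) → ZMod 2),
        (∑ i, x i * y (σ' i)) = ∑ i, x i * y (σ (Equiv.swap a b i)) := fun _ _ => rfl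
    have hle' : D ⊓ dualCode (D.map (permMap σ')) ≤ D ⊓ dualCode (D.map (permMap σ)) := by
      intro x hx
      rw [mem_L_iff] at hx ⊢
      obtain ⟨hxD, hxd⟩ := hx
      have key : ∀ y ∈ D,
          (∑ i, x i * y (σ i)) + (x a + x b) * (y (σ a) + y (σ b)) = 0 := by
        intro y hy
        rw [← swap_sum σ hab x y, ← happ x y]
        exact hxd y hy
      rcases zmod2_cases (x a + x b) with hz | hz
      · refine ⟨hxD, fun y hy => ?_⟩
        have h4 := key y hy
        rwa [hz, zero_mul, add_zero] at h4
      · exfalso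
        have h4 := key y₀ hy₀D
        rw [hy₀d x hxD, hz, hψ, zero_add, one_mul] at h4
        exact one_ne_zero h4
    have hx₀notin : x₀ ∉ D ⊓ dualCode (D.map (permMap σ')) := by
      intro hx
      rw [mem_L_iff] at hx
      have h4 := hx.2 y₀ hy₀D
      rw [happ x₀ y₀, swap_sum σ hab, hx₀d y₀ hy₀D, hφ, hψ, zero_add, one_mul] at h4
      exact one_ne_zero h4
    have hlt : D ⊓ dualCode (D.map (permMap σ')) < D ⊓ dualCode (D.map (permMap σ)) := by
      refine lt_of_le_of_ne hle' fun h => hx₀notin ?_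
      rw [h]
      exact (mem_L_iff D σ x₀).mpr ⟨hx₀D, hx₀d⟩
    have hfr := Submodule.finrank_lt_finrank_of_lt hlt
    exact ih σ' (by omega)
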